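/- Let B be an invertible n × n real matrix whose rows b₁, …, bₙ satisfy ‖bᵢ‖₁ = 1 for all i, and suppose the lattice Λ = {mB : m ∈ ℤ^n} is admissible for the ℓ¹-norm, i.e. ‖v‖₁ ≥ 1 for every v ∈ Λ \ {0}. If m ∈ ℤ^n satisfies ‖∑_{i=1}^n mᵢ bᵢ‖₁ = 1, then |mᵢ| ≤ n! for all i = 1, …, n. -/

import Mathlib

open Matrix MeasureTheory Submodule ENNReal

/-- ℓ¹ Hadamard-type bound via columns. -/
lemma abs_det_le_prod_col_sums {n : ℕ} (A : Matrix (Fin n) (Fin n) ℝ) :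
    |A.det| ≤ ∏ j, ∑ i, |A i j| := by
  classical
  rw [Matrix.det_apply]
  calc |∑ σ : Equiv.Perm (Fin n), Equiv.Perm.sign σ • ∏ i, A (σ i) i|
      ≤ ∑ σ : Equiv.Perm (Fin n), |Equiv.Perm.sign σ • ∏ i, A (σ i) i| :=
        Finset.abs_sum_le_sum_abs _ _
    _ = ∑ σ : Equiv.Perm (Fin n), ∏ i, |A (σ i) i| := by
        refine Finset.sum_congr rfl fun σ _ => ?_
        rcases Int.units_eq_one_or (Equiv.Perm.sign σ) with h | h <;>
          simp [h, Finset.abs_prod, abs_neg]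
    _ = ∑ f ∈ Finset.univ.image (fun σ : Equiv.Perm (Fin n) => ⇑σ),
          ∏ i, |A (f i) i| := by
        rw [Finset.sum_image]
        intro σ _ τ _ h
        exact Equiv.coe_fn_injective h
    _ ≤ ∑ f : Fin n → Fin n, ∏ i, |A (f i) i| := by
        refine Finset.sum_le_sum_of_subset_of_nonneg (Finset.subset_univ _) ?_
        intro f _ _
        exact Finset.prod_nonneg fun i _ => abs_nonneg _
    _ = ∏ j, ∑ i, |A i j| :=
        (Fintype.prod_sum (fun j i => |A i j|)).symm

/-- Minkowski: admissibility forces `1/n! ≤ |det B|`. -/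
lemma one_div_factorial_le_abs_det {n : ℕ} (hn : 0 < n)
    (B : Matrix (Fin n) (Fin n) ℝ) (hB : IsUnit B.det)
    (hadm : ∀ v : Fin n → ℤ, v ≠ 0 →
      1 ≤ ∑ j, |Matrix.vecMul (fun k => (v k : ℝ)) B j|) :
    1 / (Nat.factorial n : ℝ) ≤ |B.det| := by
  classical
  by_contra hlt
  push_neg at hlt
  haveI : Nonempty (Fin n) := ⟨⟨0, hn⟩⟩
  haveI hInv : Invertible B := B.invertibleOfIsUnitDet hB
  haveI hInvT : Invertible Bᵀ := B.invertibleTranspose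
  set e : (Fin n → ℝ) ≃ₗ[ℝ] (Fin n → ℝ) := Bᵀ.toLinearEquiv' hInvT with he
  set b : Module.Basis (Fin n) ℝ (Fin n → ℝ) := (Pi.basisFun ℝ (Fin n)).map e with hb
  have hbrow : ∀ i, b i = B i := by
    intro i
    funext j
    simp only [hb, Module.Basis.map_apply, Pi.basisFun_apply, he]
    have : (e (Pi.single i 1)) j = (Bᵀ.mulVec (Pi.single i 1)) j := rfl
    rw [this, Matrix.mulVec_single_one]
    simp [Matrix.transpose_apply]
  have hMb : (Matrix.of fun i => (b i : Fin n → ℝ)) = B := by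
    ext i j; simp [hbrow i]
  -- the open ℓ¹ ball
  set s : Set (Fin n → ℝ) := {x | ∑ i, |x i| < 1} with hs
  have hvol : volume s = ENNReal.ofReal (2 ^ n / (Nat.factorial n : ℝ)) := by
    have := MeasureTheory.volume_sum_rpow_lt_one (Fin n) (p := 1) le_rfl
    simp only [Real.rpow_one] at this
    rw [hs, this]
    congr 1
    rw [show (1:ℝ)/1 + 1 = (1:ℕ) + 1 by norm_num, Real.Gamma_nat_eq_factorial]
    rw [Fintype.card_fin]
    rw [show (n:ℝ)/1 + 1 = (n:ℕ) + 1 by norm_num, Real.Gamma_nat_eq_factorial]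
    norm_num
  have hconv : Convex ℝ s := by
    intro x hx y hy a c ha hc hac
    simp only [hs, Set.mem_setOf_eq] at hx hy ⊢
    calc ∑ i, |a * x i + c * y i| ≤ ∑ i, (a * |x i| + c * |y i|) := by
          refine Finset.sum_le_sum fun i _ => ?_
          calc |a * x i + c * y i| ≤ |a * x i| + |c * y i| := abs_add_le _ _
            _ = a * |x i| + c * |y i| := by
                rw [abs_mul, abs_mul, abs_of_nonneg ha, abs_of_nonneg hc]
      _ = a * ∑ i, |x i| + c * ∑ i, |y i| := by
          rw [Finset.sum_add_distrib, Finset.mul_sum, Finset.mul_sum]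
      _ < a * 1 + c * 1 := by
          rcases eq_or_lt_of_le ha with ha0 | ha0
          · rcases eq_or_lt_of_le hc with hc0 | hc0
            · exfalso; rw [← ha0, ← hc0] at hac; norm_num at hac
            · have : a = 0 := ha0.symm
              simp only [this, zero_mul, zero_add]
              exact mul_lt_mul_of_pos_left hy hc0
          · rcases eq_or_lt_of_le hc with hc0 | hc0
            · have : c = 0 := hc0.symm
              simp only [this, zero_mul, add_zero]
              exact mul_lt_mul_of_pos_left hx ha0
            · exact add_lt_add (mul_lt_mul_of_pos_left hx ha0)
                (mul_lt_mul_of_pos_left hy hc0)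
      _ = 1 := by rw [mul_one, mul_one, hac]
  have hsymm : ∀ x ∈ s, -x ∈ s := by
    intro x hx
    simpa [hs] using hx
  have fund := ZSpan.isAddFundamentalDomain' b (volume : Measure (Fin n → ℝ))
  have hmeas : volume (ZSpan.fundamentalDomain b) * 2 ^ Module.finrank ℝ (Fin n → ℝ)
      < volume s := by
    rw [ZSpan.volume_fundamentalDomain, hvol, hMb]
    have hfr : Module.finrank ℝ (Fin n → ℝ) = n := by simp
    rw [hfr]
    have hfac : (0:ℝ) < (Nat.factorial n : ℝ) := by positivity
    have h2 : (2:ℝ≥0∞) ^ n = ENNReal.ofReal ((2:ℝ) ^ n) := by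
      simp [ENNReal.ofReal_pow]
    rw [h2, ← ENNReal.ofReal_mul (abs_nonneg _)]
    rw [ENNReal.ofReal_lt_ofReal_iff (by positivity)]
    calc |B.det| * 2 ^ n < (1 / (Nat.factorial n : ℝ)) * 2 ^ n :=
          mul_lt_mul_of_pos_right hlt (by positivity)
      _ = 2 ^ n / (Nat.factorial n : ℝ) := by ring
  haveI : Countable (span ℤ (Set.range (b : Fin n → (Fin n → ℝ)))).toAddSubgroup :=
    inferInstanceAs (Countable (span ℤ (Set.range (b : Fin n → (Fin n → ℝ)))))
  obtain ⟨x, hx0, hxs⟩ :=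
    exists_ne_zero_mem_lattice_of_measure_mul_two_pow_lt_measure fund hsymm hconv hmeas
  -- x is a nonzero lattice point in the open ball: contradiction
  have hxmem : (x : Fin n → ℝ) ∈ span ℤ (Set.range (b : Fin n → (Fin n → ℝ))) := x.2
  rw [mem_span_range_iff_exists_fun] at hxmem
  obtain ⟨c, hc⟩ := hxmem
  have hcne : c ≠ 0 := by
    intro h
    apply hx0
    have : (x : Fin n → ℝ) = 0 := by
      rw [← hc, h]; simp
    exact Subtype.ext this
  have hrep : ∀ j, Matrix.vecMul (fun k => (c k : ℝ)) B j = (x : Fin n → ℝ) j := by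
    intro j
    rw [← hc]
    simp only [Matrix.vecMul, dotProduct, Finset.sum_apply]
    refine Finset.sum_congr rfl fun k _ => ?_
    simp [hbrow k, ← Int.cast_smul_eq_zsmul ℝ]
  have := hadm c hcne
  simp only [hrep] at this
  have hxs' : ∑ i, |(x : Fin n → ℝ) i| < 1 := hxs
  linarith

/-- Corollary: in a lattice admissible for the ℓ¹-norm with a basis of minimal
vectors, the coefficients of any minimal vector are bounded by `n!`. -/
theorem minimal_vector_coeff_bound
    (n : ℕ) (B : Matrix (Fin n) (Fin n) ℝ) (hB : IsUnit B.det)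
    (h1 : ∀ i, ∑ j, |B i j| = 1)
    (hadm : ∀ v : Fin n → ℤ, v ≠ 0 →
      1 ≤ ∑ j, |Matrix.vecMul (fun k => (v k : ℝ)) B j|)
    (m : Fin n → ℤ)
    (hm : ∑ j, |Matrix.vecMul (fun k => (m k : ℝ)) B j| = 1) :
    ∀ i, |m i| ≤ (Nat.factorial n : ℤ) := by
  classical
  intro i
  have hn : 0 < n := i.pos
  set v : Fin n → ℝ := Matrix.vecMul (fun k => (m k : ℝ)) B with hv
  have hvsum : v = ∑ k, (m k : ℝ) • B k := by
    funext j
    simp only [hv, Matrix.vecMul, dotProduct, Finset.sum_apply, Pi.smul_apply,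
      smul_eq_mul]
  set C : Matrix (Fin n) (Fin n) ℝ := B.updateRow i v with hC
  have hdetC : C.det = (m i : ℝ) * B.det := by
    rw [hC, hvsum, Matrix.det_updateRow_sum]
    simp
  have hrowC : ∀ k, ∑ j, |C k j| = 1 := by
    intro k
    by_cases hk : k = i
    · subst hk
      simp only [hC, Matrix.updateRow_self]
      exact hm
    · simp only [hC, Matrix.updateRow_ne hk]
      exact h1 k
  have hCbound : |C.det| ≤ 1 := by
    calc |C.det| = |Cᵀ.det| := by rw [Matrix.det_transpose]
      _ ≤ ∏ j, ∑ k, |Cᵀ k j| := abs_det_le_prod_col_sums Cᵀ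
      _ = ∏ j, ∑ k, |C j k| := by
          refine Finset.prod_congr rfl fun j _ => ?_
          rfl
      _ = 1 := by
          rw [Finset.prod_congr rfl fun j _ => hrowC j]
          simp
  have hdet_lb := one_div_factorial_le_abs_det hn B hB hadm
  have hdet_pos : 0 < |B.det| := by
    have : (0:ℝ) < 1 / (Nat.factorial n : ℝ) := by positivity
    linarith
  have key : |(m i : ℝ)| * |B.det| ≤ 1 := by
    rw [← abs_mul, ← hdetC]
    exact hCbound
  have hfac_pos : (0:ℝ) < (Nat.factorial n : ℝ) := by positivity
  have : |(m i : ℝ)| ≤ (Nat.factorial n : ℝ) := by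
    by_contra habs
    push_neg at habs
    have h1' : (Nat.factorial n : ℝ) * |B.det| < |(m i : ℝ)| * |B.det| :=
      mul_lt_mul_of_pos_right habs hdet_pos
    have h2' : (1:ℝ) ≤ (Nat.factorial n : ℝ) * |B.det| := by
      rw [div_le_iff₀ hfac_pos] at hdet_lb
      linarith [hdet_lb, mul_comm |B.det| ((Nat.factorial n : ℝ))]
    linarith
  rw [← @Int.cast_le ℝ]
  push_cast
  exact this
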